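/- Let K be a field, R = K[[t^2, t^3]], and let c be a semiprime operation on R. If c(M_{j+2}) = M_j for some integer j ≥ 2, then c(I) = M_j for every nonzero ideal I ⊆ M_j; in particular c is a bounded semiprime operation. -/

import Mathlib

open PowerSeries

/-- A closure operation on the set of ideals of a commutative ring. -/
def IsClosureOperation {R : Type*} [CommRing R] (c : Ideal R → Ideal R) : Prop :=
  (∀ I : Ideal R, I ≤ c I) ∧ (∀ I J : Ideal R, I ≤ J → c I ≤ c J) ∧
    (∀ I : Ideal R, c (c I) = c I)

/-- A semiprime operation: a closure operation satisfying `c I * c J ≤ c (I * J)`. -/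
def IsSemiprimeOperation {R : Type*} [CommRing R] (c : Ideal R → Ideal R) : Prop :=
  IsClosureOperation c ∧ ∀ I J : Ideal R, c I * c J ≤ c (I * J)

/-- A prime operation: a semiprime operation satisfying `c (bI) = b c I` for every
non-zerodivisor `b`. -/
def IsPrimeOperation {R : Type*} [CommRing R] (c : Ideal R → Ideal R) : Prop :=
  IsSemiprimeOperation c ∧
    ∀ b : R, b ∈ nonZeroDivisors R → ∀ I : Ideal R,
      c (Ideal.span {b} * I) = Ideal.span {b} * c I

/-- A (semiprime) operation is bounded if there is a nonzero proper ideal `J`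
such that `c I = J` for every nonzero ideal `I ⊆ J`. -/
def IsBoundedOperation {R : Type*} [CommRing R] (c : Ideal R → Ideal R) : Prop :=
  ∃ J : Ideal R, J ≠ ⊥ ∧ J ≠ ⊤ ∧ ∀ I : Ideal R, I ≠ ⊥ → I ≤ J → c I = J

/-- The ring `K[[t^2, t^3]]`: power series over `K` with vanishing linear coefficient. -/
def cuspRing (K : Type*) [Field K] : Subring (PowerSeries K) where
  carrier := {f | PowerSeries.coeff 1 f = 0}
  zero_mem' := by simp
  one_mem' := by simp
  add_mem' := by
    intro a b ha hb
    simp only [Set.mem_setOf_eq, map_add] at *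
    rw [ha, hb, add_zero]
  neg_mem' := by
    intro a ha
    simp only [Set.mem_setOf_eq, map_neg] at *
    rw [ha, neg_zero]
  mul_mem' := by
    intro a b ha hb
    simp only [Set.mem_setOf_eq] at *
    rw [PowerSeries.coeff_mul]
    rw [Finset.Nat.sum_antidiagonal_eq_sum_range_succ_mk]
    simp [Finset.sum_range_succ, ha, hb]

/-- The principal ideal `P_{n,a} = (t^n + a t^{n+1})` of `K[[t^2,t^3]]`. -/
noncomputable def Pgen (K : Type*) [Field K] (n : ℕ) (a : K) : Ideal (cuspRing K) :=
  Ideal.span {x : cuspRing K |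
    (x : PowerSeries K) = X ^ n + PowerSeries.C a * X ^ (n + 1)}

/-- The two-generated ideal `M_n = (t^n, t^{n+1})` of `K[[t^2,t^3]]`. -/
noncomputable def Mgen (K : Type*) [Field K] (n : ℕ) : Ideal (cuspRing K) :=
  Ideal.span {x : cuspRing K |
    (x : PowerSeries K) = X ^ n ∨ (x : PowerSeries K) = X ^ (n + 1)}

set_option synthInstance.maxHeartbeats 1000000
set_option maxHeartbeats 1000000

namespace CuspAux
variable {K : Type*} [Field K]

lemma mem_cuspRing {f : PowerSeries K} : f ∈ cuspRing K ↔ coeff 1 f = 0 := Iff.rfl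

lemma mem_cuspRing_of_dvd {f : PowerSeries K} (h : (X : PowerSeries K)^2 ∣ f) :
    f ∈ cuspRing K := by
  rw [mem_cuspRing]
  exact X_pow_dvd_iff.mp h 1 (by norm_num)

noncomputable def tp (K : Type*) [Field K] (n : ℕ) : cuspRing K :=
  ⟨X ^ (n + 2), mem_cuspRing_of_dvd ⟨X ^ n, by ring⟩⟩

@[simp] lemma coe_tp (n : ℕ) : ((tp K n : cuspRing K) : PowerSeries K) = X ^ (n + 2) := rfl

lemma tp_mul (a b : ℕ) : tp K a * tp K b = tp K (a + b + 2) := by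
  apply Subtype.ext
  push_cast [coe_tp]
  ring

lemma tp_ne_zero (n : ℕ) : tp K n ≠ 0 := by
  intro hx
  have : ((tp K n : cuspRing K) : PowerSeries K) = 0 := by rw [hx]; rfl
  rw [coe_tp] at this
  exact pow_ne_zero _ X_ne_zero this

lemma Mgen_eq (n : ℕ) : Mgen K (n + 2) = Ideal.span {tp K n, tp K (n + 1)} := by
  unfold Mgen
  congr 1
  ext x
  simp only [Set.mem_setOf_eq, Set.mem_insert_iff, Set.mem_singleton_iff]
  constructor
  · rintro (h | h)
    · left; exact Subtype.ext h
    · right; exact Subtype.ext (by rw [h, coe_tp])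
  · rintro (rfl | rfl)
    · left; rfl
    · right; rw [coe_tp]

lemma tp_mem_Mgen (n : ℕ) : tp K n ∈ Mgen K (n + 2) := by
  rw [Mgen_eq]
  exact Ideal.subset_span (Set.mem_insert _ _)

lemma tp_mem_Mgen' (n : ℕ) : tp K (n + 1) ∈ Mgen K (n + 2) := by
  rw [Mgen_eq]
  exact Ideal.subset_span (Set.mem_insert_of_mem _ rfl)

lemma Mgen_succ_le (n : ℕ) : Mgen K (n + 3) ≤ Mgen K (n + 2) := by
  rw [Mgen_eq (n+1)]
  rw [Ideal.span_le]
  rintro x (rfl | hx)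
  · exact tp_mem_Mgen' n
  · rw [Set.mem_singleton_iff] at hx
    subst hx
    have : tp K (n + 2) = tp K n * tp K 0 := by rw [tp_mul]
    rw [this]
    exact Ideal.mul_mem_right _ _ (tp_mem_Mgen n)

lemma Mgen_anti {a b : ℕ} (h : a ≤ b) : Mgen K (b + 2) ≤ Mgen K (a + 2) := by
  induction b, h using Nat.le_induction with
  | base => exact le_refl _
  | succ b hb ih => exact le_trans (Mgen_succ_le b) ih

lemma span_tp_mul_Mgen (n : ℕ) :
    Ideal.span {tp K 0} * Mgen K (n + 2) = Mgen K (n + 4) := by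
  rw [Mgen_eq n, show n + 4 = n + 2 + 2 by omega, Mgen_eq (n + 2),
    Ideal.span_insert, Ideal.mul_sup, Ideal.span_singleton_mul_span_singleton,
    Ideal.span_singleton_mul_span_singleton, tp_mul, tp_mul,
    Ideal.span_insert, show 0 + n + 2 = n + 2 by omega, show 0 + (n+1) + 2 = n + 3 by omega]

lemma Mgen_ne_bot (n : ℕ) : Mgen K (n + 2) ≠ ⊥ := by
  intro hb
  have := tp_mem_Mgen (K := K) n
  rw [hb, Ideal.mem_bot] at this
  exact tp_ne_zero n this

lemma Mgen_ne_top (n : ℕ) : Mgen K (n + 2) ≠ ⊤ := by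
  intro ht
  have h1 : (1 : cuspRing K) ∈ Mgen K (n + 2) := ht ▸ trivial
  have hk : Mgen K (n + 2) ≤ RingHom.ker (constantCoeff.comp (SubringClass.subtype (cuspRing K))) := by
    rw [Mgen_eq, Ideal.span_le]
    rintro x (rfl | hx)
    · simp [RingHom.mem_ker, coe_tp]
    · rw [Set.mem_singleton_iff] at hx
      subst hx
      simp [RingHom.mem_ker, coe_tp]
  have := hk h1
  simp [RingHom.mem_ker] at this

lemma exists_Mgen_le (I : Ideal (cuspRing K)) (hI : I ≠ ⊥) : ∃ m : ℕ, Mgen K (m + 2) ≤ I := by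
  obtain ⟨f, hfI, hf0⟩ := Submodule.exists_mem_ne_zero_of_ne_bot hI
  set F : PowerSeries K := (f : PowerSeries K) with hF
  have hF0 : F ≠ 0 := by
    intro h0
    exact hf0 (Subtype.ext h0)
  have hex : ∃ n, coeff n F ≠ 0 := by
    by_contra hcon
    push_neg at hcon
    exact hF0 (PowerSeries.ext fun n => by rw [hcon n, map_zero])
  classical
  set m := Nat.find hex with hmdef
  have hm : coeff m F ≠ 0 := Nat.find_spec hex
  have hmin : ∀ k < m, coeff k F = 0 := by
    intro k hk
    by_contra hne
    have : m ≤ k := Nat.find_le hne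
    omega
  obtain ⟨g, hg⟩ : (X : PowerSeries K) ^ m ∣ F := X_pow_dvd_iff.mpr hmin
  have hg0 : constantCoeff g ≠ 0 := by
    intro h0
    apply hm
    rw [hg]
    have := PowerSeries.coeff_X_pow_mul g m 0
    rw [zero_add] at this
    rw [this]
    simpa using h0
  refine ⟨m, ?_⟩
  rw [Mgen_eq, Ideal.span_le]
  have key : ∀ i : ℕ, (⟨X ^ (m + 2 + i) , mem_cuspRing_of_dvd ⟨X ^ (m + i), by ring⟩⟩ : cuspRing K) ∈ I := by
    intro i
    have hr : (X : PowerSeries K) ^ (2 + i) * g⁻¹ ∈ cuspRing K :=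
      mem_cuspRing_of_dvd ⟨X ^ i * g⁻¹, by ring⟩
    have : (⟨X ^ (m + 2 + i), mem_cuspRing_of_dvd ⟨X ^ (m + i), by ring⟩⟩ : cuspRing K)
        = f * ⟨X ^ (2 + i) * g⁻¹, hr⟩ := by
      apply Subtype.ext
      push_cast
      rw [← hF, hg]
      rw [show (X:PowerSeries K) ^ m * g * (X ^ (2 + i) * g⁻¹) = X ^ m * X ^ (2+i) * (g * g⁻¹) by ring]
      rw [PowerSeries.mul_inv_cancel _ hg0, mul_one, ← pow_add]
      ring_nf
    rw [this]
    exact Ideal.mul_mem_right _ _ hfI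
  rintro x (rfl | hx)
  · exact key 0
  · rw [Set.mem_singleton_iff] at hx
    subst hx
    exact key 1

end CuspAux

open CuspAux

set_option synthInstance.maxHeartbeats 1000000 in
set_option maxHeartbeats 1000000 in
theorem cusp_bounded_of_Mj_eq_closure_Mj2 {K : Type*} [Field K]
    (c : Ideal (cuspRing K) → Ideal (cuspRing K)) (hc : IsSemiprimeOperation c)
    (j : ℕ) (hj : 2 ≤ j) (h : c (Mgen K (j + 2)) = Mgen K j) :
    (∀ I : Ideal (cuspRing K), I ≠ ⊥ → I ≤ Mgen K j → c I = Mgen K j) ∧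
      IsBoundedOperation c := by
  obtain ⟨⟨hle, hmono, hidem⟩, hmul⟩ := hc
  obtain ⟨j', rfl⟩ : ∃ j', j = j' + 2 := ⟨j - 2, by omega⟩
  have hcMj : c (Mgen K (j' + 2)) = Mgen K (j' + 2) := by
    calc c (Mgen K (j' + 2)) = c (c (Mgen K (j' + 2 + 2))) := by rw [h]
      _ = c (Mgen K (j' + 2 + 2)) := hidem _
      _ = Mgen K (j' + 2) := h
  have key : ∀ k : ℕ, c (Mgen K (j' + 2 * k + 2)) = Mgen K (j' + 2) := by
    intro k
    induction k with
    | zero =>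
      have e : j' + 2 * 0 + 2 = j' + 2 := by omega
      rw [e]; exact hcMj
    | succ k ih =>
      have lower : Mgen K (j' + 2) ≤ c (Mgen K (j' + 2 * (k + 1) + 2)) := by
        have s1 : Ideal.span {tp K 0} * c (Mgen K (j' + 2 * k + 2)) ≤
            c (Ideal.span {tp K 0} * Mgen K (j' + 2 * k + 2)) :=
          le_trans (Ideal.mul_mono_left (hle _)) (hmul _ _)
        rw [ih] at s1
        rw [span_tp_mul_Mgen j'] at s1
        rw [span_tp_mul_Mgen (j' + 2 * k)] at s1
        have s2 : c (Mgen K (j' + 4)) ≤ c (Mgen K (j' + 2 * k + 4)) := by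
          calc c (Mgen K (j' + 4)) ≤ c (c (Mgen K (j' + 2 * k + 4))) := hmono _ _ s1
            _ = c (Mgen K (j' + 2 * k + 4)) := hidem _
        have e2 : j' + 4 = j' + 2 + 2 := by omega
        have e3 : j' + 2 * k + 4 = j' + 2 * (k + 1) + 2 := by omega
        rw [e2, e3, h] at s2
        exact s2
      have upper : c (Mgen K (j' + 2 * (k + 1) + 2)) ≤ Mgen K (j' + 2) := by
        have hanti : Mgen K (j' + 2 * (k + 1) + 2) ≤ Mgen K (j' + 2) :=
          Mgen_anti (a := j') (b := j' + 2 * (k + 1)) (by omega)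
        exact (hmono _ _ hanti).trans (le_of_eq hcMj)
      exact le_antisymm upper lower
  have main : ∀ I : Ideal (cuspRing K), I ≠ ⊥ → I ≤ Mgen K (j' + 2) →
      c I = Mgen K (j' + 2) := by
    intro I hI hIle
    obtain ⟨m, hm⟩ := exists_Mgen_le I hI
    have hmk : Mgen K (j' + 2 * m + 2) ≤ Mgen K (m + 2) :=
      Mgen_anti (a := m) (b := j' + 2 * m) (by omega)
    have low : Mgen K (j' + 2) ≤ c I := by
      rw [← key m]
      exact hmono _ _ (hmk.trans hm)
    have upp : c I ≤ Mgen K (j' + 2) := (hmono _ _ hIle).trans (le_of_eq hcMj)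
    exact le_antisymm upp low
  exact ⟨main, ⟨Mgen K (j' + 2), Mgen_ne_bot j', Mgen_ne_top j', main⟩⟩
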